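/- Let X be a nonempty set and φ : X → ℝ^d a map such that the image φ(X) is compact and spans ℝ^d. Then there exists a finitely supported probability distribution ρ on X whose support has at most 4d·log(log d) + 16 points, such that the matrix G(ρ) = Σ_{x ∈ supp(ρ)} ρ(x)·φ(x)·φ(x)ᵀ is invertible, and such that the following holds: for all ε ≥ 0, δ ≥ 0, all θ⋆ ∈ ℝ^d, and all functions μ, r : X → ℝ satisfying |μ(x) − ⟨φ(x), θ⋆⟩| ≤ ε for all x ∈ X and |r(x) − μ(x)| ≤ δ for all x ∈ supp(ρ), the least-squares estimator θ̂ = G(ρ)^{−1}·Σ_{x ∈ supp(ρ)} ρ(x)·r(x)·φ(x) satisfies sup_{x ∈ X} |⟨φ(x), θ̂⟩ − μ(x)| ≤ ε + (ε + δ)·√(2d). -/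

import Mathlib

open Matrix

section AuxStmt13

variable {d : ℕ}

lemma vmv_mulVec (v w p : Fin d → ℝ) : vecMulVec v w *ᵥ p = (w ⬝ᵥ p) • v := by
  ext i
  simp [vecMulVec_apply, mulVec, dotProduct, Finset.mul_sum, mul_comm, mul_left_comm]

lemma dot_vmv (p v w q : Fin d → ℝ) : p ⬝ᵥ (vecMulVec v w *ᵥ q) = (p ⬝ᵥ v) * (w ⬝ᵥ q) := by
  rw [vmv_mulVec, dotProduct_smul, smul_eq_mul, mul_comm]

lemma det_rank_two_update (A : Matrix (Fin d) (Fin d) ℝ) (hA : IsUnit A.det)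
    (x v : Fin d → ℝ) :
    (A + vecMulVec x x - vecMulVec v v).det =
      A.det * ((1 + x ⬝ᵥ (A⁻¹ *ᵥ x)) * (1 - v ⬝ᵥ (A⁻¹ *ᵥ v)) +
        (x ⬝ᵥ (A⁻¹ *ᵥ v)) * (v ⬝ᵥ (A⁻¹ *ᵥ x))) := by
  classical
  set M : Matrix (Fin d) (Fin 2) ℝ := Matrix.of fun i j => if j = 0 then x i else v i with hM
  set N : Matrix (Fin 2) (Fin d) ℝ := Matrix.of fun j k => if j = 0 then x k else -v k with hN
  have hMN : M * N = vecMulVec x x - vecMulVec v v := by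
    ext i k
    simp [hM, hN, Matrix.mul_apply, Fin.sum_univ_two, vecMulVec_apply, sub_eq_add_neg]
  have h1 : A + vecMulVec x x - vecMulVec v v = A * (1 + (A⁻¹ * M) * N) := by
    have h2 : A * (1 + (A⁻¹ * M) * N) = A + (A * A⁻¹) * (M * N) := by
      rw [Matrix.mul_add, Matrix.mul_one, Matrix.mul_assoc A⁻¹ M N, ← Matrix.mul_assoc]
    rw [h2, A.mul_nonsing_inv hA, Matrix.one_mul, hMN]
    abel
  rw [h1, det_mul, Matrix.det_one_add_mul_comm]
  have h3 : 1 + N * (A⁻¹ * M) = Matrix.of ![![1 + x ⬝ᵥ (A⁻¹ *ᵥ x), x ⬝ᵥ (A⁻¹ *ᵥ v)],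
      ![-(v ⬝ᵥ (A⁻¹ *ᵥ x)), 1 - (v ⬝ᵥ (A⁻¹ *ᵥ v))]] := by
    ext j k
    fin_cases j <;> fin_cases k <;>
      · simp [hM, hN, Matrix.mul_apply, dotProduct, mulVec, Finset.mul_sum, Finset.sum_mul,
          Matrix.one_apply, sub_eq_add_neg]
        try rw [Finset.sum_comm]
        try { refine Finset.sum_congr rfl fun a _ => Finset.sum_congr rfl fun b _ => by ring }
  rw [h3, Matrix.det_fin_two_of]
  ring

lemma sum_mulVec' {ι : Type*} (s : Finset ι) (f : ι → Matrix (Fin d) (Fin d) ℝ)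
    (x : Fin d → ℝ) : (∑ i ∈ s, f i) *ᵥ x = ∑ i ∈ s, f i *ᵥ x := by
  ext j
  simp only [mulVec, dotProduct, Matrix.sum_apply, Finset.sum_apply, Finset.sum_mul]
  rw [Finset.sum_comm]

lemma dot_sum {ι : Type*} (s : Finset ι) (x : Fin d → ℝ) (f : ι → Fin d → ℝ) :
    x ⬝ᵥ (∑ i ∈ s, f i) = ∑ i ∈ s, x ⬝ᵥ f i := by
  simp only [dotProduct, Finset.sum_apply, Finset.mul_sum]
  rw [Finset.sum_comm]

noncomputable def dmat {n : ℕ} (v : Fin n → (Fin d → ℝ)) : Matrix (Fin d) (Fin d) ℝ :=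
  ∑ i, vecMulVec (v i) (v i)

lemma dmat_symm {n : ℕ} (v : Fin n → (Fin d → ℝ)) : (dmat v)ᵀ = dmat v := by
  unfold dmat
  rw [Matrix.transpose_sum]
  refine Finset.sum_congr rfl fun i _ => ?_
  ext a b
  simp [vecMulVec_apply, mul_comm]

lemma dot_dmat {n : ℕ} (v : Fin n → (Fin d → ℝ)) (x : Fin d → ℝ) :
    x ⬝ᵥ (dmat v *ᵥ x) = ∑ i, (x ⬝ᵥ v i) ^ 2 := by
  unfold dmat
  rw [sum_mulVec', dot_sum]
  refine Finset.sum_congr rfl fun i _ => ?_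
  rw [dot_vmv, dotProduct_comm (v i) x]
  ring

lemma dmat_posdef {n : ℕ} (v : Fin n → (Fin d → ℝ))
    (hspan : Submodule.span ℝ (Set.range v) = ⊤) : (dmat v).PosDef := by
  refine Matrix.posDef_iff_dotProduct_mulVec.mpr ⟨?_, ?_⟩
  · rw [Matrix.IsHermitian]
    simpa using dmat_symm v
  · intro x hx
    have hstar : (star x : Fin d → ℝ) = x := by simp
    rw [hstar, dot_dmat]
    have hnn : ∀ i ∈ Finset.univ, (0:ℝ) ≤ (x ⬝ᵥ v i) ^ 2 := fun i _ => sq_nonneg _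
    refine lt_of_le_of_ne (Finset.sum_nonneg hnn) (fun h0 => hx ?_)
    have hall := (Finset.sum_eq_zero_iff_of_nonneg hnn).mp h0.symm
    have hdot : ∀ y ∈ Submodule.span ℝ (Set.range v), x ⬝ᵥ y = 0 := by
      intro y hy
      induction hy using Submodule.span_induction with
      | mem y hy =>
        obtain ⟨i, rfl⟩ := hy
        have := hall i (Finset.mem_univ i)
        have h2 : x ⬝ᵥ v i = 0 := by
          nlinarith [this, sq_nonneg (x ⬝ᵥ v i)]
        exact h2
      | zero => simp
      | add y z _ _ hy hz => rw [dotProduct_add, hy, hz, add_zero]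
      | smul c y _ hy => rw [dotProduct_smul, hy, smul_zero]
    have hxx : x ⬝ᵥ x = 0 := hdot x (by rw [hspan]; trivial)
    exact (dotProduct_self_eq_zero).mp hxx

lemma dot_mulVec_eq_trace (B : Matrix (Fin d) (Fin d) ℝ) (v : Fin d → ℝ) :
    v ⬝ᵥ (B *ᵥ v) = (B * vecMulVec v v).trace := by
  simp only [Matrix.trace, Matrix.diag, Matrix.mul_apply, vecMulVec_apply, mulVec, dotProduct,
    Finset.mul_sum]
  exact Finset.sum_congr rfl fun a _ => Finset.sum_congr rfl fun b _ => by ring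

lemma exists_spanning_tuple {n : ℕ} (hd : 1 ≤ d) (hdn : d ≤ n) (S : Set (Fin d → ℝ))
    (hspan : Submodule.span ℝ S = ⊤) :
    ∃ u : Fin n → (Fin d → ℝ), (∀ i, u i ∈ S) ∧ Submodule.span ℝ (Set.range u) = ⊤ := by
  classical
  obtain ⟨b, hbS, hbspan, hbli⟩ := exists_linearIndependent ℝ S
  have hfin : b.Finite := hbli.setFinite
  have hbspan' : Submodule.span ℝ b = ⊤ := by rw [hbspan, hspan]
  have hbne : b.Nonempty := by
    rcases Set.eq_empty_or_nonempty b with rfl | h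
    · exfalso
      rw [Submodule.span_empty] at hbspan'
      have h1 : (fun _ => (1:ℝ) : Fin d → ℝ) ∈ (⊥ : Submodule ℝ (Fin d → ℝ)) := by
        rw [hbspan']; trivial
      have := (Submodule.mem_bot ℝ).mp h1
      have := congrFun this ⟨0, hd⟩
      norm_num at this
    · exact h
  set t := hfin.toFinset with ht
  have htb : (t : Set (Fin d → ℝ)) = b := hfin.coe_toFinset
  have hcard : t.card ≤ d := by
    rw [← htb] at hbli
    have := hbli.finset_card_le_finrank
    rwa [Module.finrank_fintype_fun_eq_card, Fintype.card_fin] at this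
  obtain ⟨y₀, hy₀⟩ := hbne
  have hy₀t : y₀ ∈ t := by rw [← Finset.mem_coe, htb]; exact hy₀
  let e := t.equivFin
  refine ⟨fun i => if h : (i : ℕ) < t.card then (e.symm ⟨i, h⟩ : Fin d → ℝ) else y₀, ?_, ?_⟩
  · intro i
    by_cases h : (i : ℕ) < t.card
    · simp only [h, dif_pos]
      exact hbS (by rw [← htb]; exact Finset.mem_coe.mpr (e.symm ⟨i, h⟩).2)
    · simp only [h, dif_neg, not_false_iff]
      exact hbS hy₀
  · rw [eq_top_iff, ← hbspan']
    apply Submodule.span_le.mpr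
    intro y hy
    have hyt : y ∈ t := by rw [← Finset.mem_coe, htb]; exact hy
    apply Submodule.subset_span
    refine ⟨⟨(e ⟨y, hyt⟩ : ℕ), lt_of_lt_of_le (e ⟨y, hyt⟩).2 (hcard.trans hdn)⟩, ?_⟩
    have h : ((⟨(e ⟨y, hyt⟩ : ℕ), lt_of_lt_of_le (e ⟨y, hyt⟩).2 (hcard.trans hdn)⟩ : Fin n) : ℕ)
        < t.card := (e ⟨y, hyt⟩).2
    simp only [h, dif_pos]
    have : (⟨((⟨(e ⟨y, hyt⟩ : ℕ), lt_of_lt_of_le (e ⟨y, hyt⟩).2 (hcard.trans hdn)⟩ : Fin n) : ℕ), h⟩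
        : Fin t.card) = e ⟨y, hyt⟩ := by ext; rfl
    rw [this, Equiv.symm_apply_apply]

lemma exists_good_design (hd : 1 ≤ d) (S : Set (Fin d → ℝ)) (hS : IsCompact S)
    (hSne : S.Nonempty) (hspan : Submodule.span ℝ S = ⊤) :
    ∃ v : Fin (2*d-1) → (Fin d → ℝ), (∀ i, v i ∈ S) ∧ 0 < (dmat v).det ∧
      ∀ x ∈ S, x ⬝ᵥ ((dmat v)⁻¹ *ᵥ x) ≤ 1 := by
  classical
  have hdn : d ≤ 2*d-1 := by omega
  -- continuity of the design determinant
  have hFc : Continuous (fun u : Fin (2*d-1) → Fin d → ℝ => (dmat u).det) := by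
    apply Continuous.matrix_det
    apply continuous_matrix
    intro a b
    unfold dmat
    simp only [Matrix.sum_apply, vecMulVec_apply]
    exact continuous_finset_sum _ fun i _ =>
      by fun_prop
  -- compactness of the domain
  have hK : IsCompact (Set.univ.pi (fun _ : Fin (2*d-1) => S)) :=
    isCompact_univ_pi (fun _ => hS)
  have hKne : (Set.univ.pi (fun _ : Fin (2*d-1) => S)).Nonempty :=
    ⟨fun _ => hSne.choose, fun i _ => hSne.choose_spec⟩
  obtain ⟨v, hvK, hvmax⟩ := hK.exists_isMaxOn hKne hFc.continuousOn
  have hvS : ∀ i, v i ∈ S := fun i => hvK i (Set.mem_univ i)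
  -- positivity of the maximum
  obtain ⟨u₀, hu₀S, hu₀span⟩ := exists_spanning_tuple (n := 2*d-1) hd hdn S hspan
  have hu₀pos : 0 < (dmat u₀).det := (dmat_posdef u₀ hu₀span).det_pos
  have hdet : 0 < (dmat v).det := by
    refine lt_of_lt_of_le hu₀pos ?_
    exact hvmax (fun i _ => hu₀S i)
  set A := dmat v with hA
  have hdetu : IsUnit A.det := isUnit_iff_ne_zero.mpr (ne_of_gt hdet)
  have hsymm : Aᵀ = A := dmat_symm v
  have hsymm_inv : A⁻¹ᵀ = A⁻¹ := by rw [Matrix.transpose_nonsing_inv, hsymm]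
  refine ⟨v, hvS, hdet, ?_⟩
  intro x hxS
  set p := A⁻¹ *ᵥ x with hp
  -- exchange inequality for each i
  have hQ : ∀ i : Fin (2*d-1),
      (1 + x ⬝ᵥ (A⁻¹ *ᵥ x)) * (1 - v i ⬝ᵥ (A⁻¹ *ᵥ v i)) +
        (x ⬝ᵥ (A⁻¹ *ᵥ v i)) * (v i ⬝ᵥ (A⁻¹ *ᵥ x)) ≤ 1 := by
    intro i
    have hupdK : Function.update v i x ∈ Set.univ.pi (fun _ : Fin (2*d-1) => S) := by
      intro j _
      by_cases h : j = i
      · subst h; simp [Function.update_self, hxS]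
      · simp [Function.update_of_ne h, hvS j]
    have hle := hvmax hupdK
    have hupd : dmat (Function.update v i x) = A + vecMulVec x x - vecMulVec (v i) (v i) := by
      unfold dmat
      have hfun : ∀ j, vecMulVec (Function.update v i x j) (Function.update v i x j)
          = Function.update (fun j => vecMulVec (v j) (v j)) i (vecMulVec x x) j := by
        intro j
        by_cases h : j = i
        · subst h; simp [Function.update_self]
        · simp [Function.update_of_ne h]
      rw [Finset.sum_congr rfl fun j _ => hfun j, Finset.sum_update_of_mem (Finset.mem_univ i)]
      have herase : ∑ j ∈ Finset.univ \ {i}, vecMulVec (v j) (v j)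
          = dmat v - vecMulVec (v i) (v i) := by
        rw [eq_sub_iff_add_eq]
        rw [Finset.sum_sdiff_eq_sub (Finset.singleton_subset_iff.mpr (Finset.mem_univ i))]
        simp [dmat]
      rw [herase, hA]
      abel
    rw [isMaxOn_iff] at hvmax
    have hle' : (dmat (Function.update v i x)).det ≤ A.det := hle
    rw [hupd, det_rank_two_update A hdetu x (v i)] at hle'
    nlinarith [hle', hdet]
  -- sum the exchange inequalities
  have htr : ∑ i, v i ⬝ᵥ (A⁻¹ *ᵥ v i) = (d : ℝ) := by
    have : ∀ i : Fin (2*d-1), v i ⬝ᵥ (A⁻¹ *ᵥ v i) = (A⁻¹ * vecMulVec (v i) (v i)).trace :=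
      fun i => dot_mulVec_eq_trace _ _
    rw [Finset.sum_congr rfl fun i _ => this i, ← Matrix.trace_sum, ← Matrix.mul_sum]
    rw [show (∑ i, vecMulVec (v i) (v i)) = A from rfl]
    rw [A.nonsing_inv_mul hdetu, Matrix.trace_one]
    simp
  have hcross : ∑ i, (x ⬝ᵥ (A⁻¹ *ᵥ v i)) * (v i ⬝ᵥ (A⁻¹ *ᵥ x)) = x ⬝ᵥ (A⁻¹ *ᵥ x) := by
    have hxv : ∀ w : Fin d → ℝ, x ⬝ᵥ (A⁻¹ *ᵥ w) = p ⬝ᵥ w := by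
      intro w
      rw [dotProduct_mulVec, hp]
      congr 1
      rw [← Matrix.vecMul_transpose, hsymm_inv]
    have hsum : ∀ i : Fin (2*d-1), (x ⬝ᵥ (A⁻¹ *ᵥ v i)) * (v i ⬝ᵥ (A⁻¹ *ᵥ x)) = (p ⬝ᵥ v i)^2 := by
      intro i
      rw [hxv (v i), show v i ⬝ᵥ (A⁻¹ *ᵥ x) = v i ⬝ᵥ p from rfl, dotProduct_comm (v i) p]
      ring
    rw [Finset.sum_congr rfl fun i _ => hsum i, ← dot_dmat v p]
    rw [show dmat v = A from rfl]
    rw [hp, Matrix.mulVec_mulVec, A.mul_nonsing_inv hdetu, Matrix.one_mulVec]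
    rw [hxv x]
  have hsumQ : ∑ i : Fin (2*d-1), ((1 + x ⬝ᵥ (A⁻¹ *ᵥ x)) * (1 - v i ⬝ᵥ (A⁻¹ *ᵥ v i)) +
      (x ⬝ᵥ (A⁻¹ *ᵥ v i)) * (v i ⬝ᵥ (A⁻¹ *ᵥ x))) ≤ (2*d-1 : ℕ) := by
    calc ∑ i : Fin (2*d-1), ((1 + x ⬝ᵥ (A⁻¹ *ᵥ x)) * (1 - v i ⬝ᵥ (A⁻¹ *ᵥ v i)) +
        (x ⬝ᵥ (A⁻¹ *ᵥ v i)) * (v i ⬝ᵥ (A⁻¹ *ᵥ x))) ≤ ∑ _i : Fin (2*d-1), (1:ℝ) :=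
      Finset.sum_le_sum fun i _ => hQ i
    _ = (2*d-1 : ℕ) := by simp
  have hexpand : ∑ i : Fin (2*d-1), ((1 + x ⬝ᵥ (A⁻¹ *ᵥ x)) * (1 - v i ⬝ᵥ (A⁻¹ *ᵥ v i)) +
      (x ⬝ᵥ (A⁻¹ *ᵥ v i)) * (v i ⬝ᵥ (A⁻¹ *ᵥ x)))
      = (1 + x ⬝ᵥ (A⁻¹ *ᵥ x)) * ((2*d-1 : ℕ) - (d:ℝ)) + x ⬝ᵥ (A⁻¹ *ᵥ x) := by
    rw [Finset.sum_add_distrib, hcross, ← Finset.mul_sum]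
    congr 2
    rw [Finset.sum_sub_distrib, htr, Finset.sum_const]
    simp
  rw [hexpand] at hsumQ
  have hdr : (1:ℝ) ≤ (d:ℝ) := by exact_mod_cast hd
  have hcast : ((2*d-1 : ℕ) : ℝ) = 2*(d:ℝ) - 1 := by
    have : (1:ℕ) ≤ 2*d := by omega
    push_cast [Nat.cast_sub this]
    ring
  rw [hcast] at hsumQ
  nlinarith [hsumQ, hdr]

lemma card_num_bound (d : ℕ) (hd : 1 ≤ d) :
    ((2*d-1 : ℕ) : ℝ) ≤ 4*d*Real.log (Real.log d) + 16 := by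
  have hcast : ((2*d-1:ℕ):ℝ) = 2*(d:ℝ)-1 := by
    have h1 : (1:ℕ) ≤ 2*d := by omega
    push_cast [Nat.cast_sub h1]
    ring
  rw [hcast]
  rcases eq_or_ne d 1 with rfl | hd1
  · simp [Real.log_one]
    norm_num
  rcases eq_or_ne d 2 with rfl | hd2
  · have h2 : (0.6931471803:ℝ) < Real.log 2 := Real.log_two_gt_d9
    have hpos : (0:ℝ) < Real.log 2 := by linarith
    have hln : Real.log ((Real.log 2)⁻¹) ≤ (Real.log 2)⁻¹ - 1 :=
      Real.log_le_sub_one_of_pos (by positivity)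
    have hinv : (Real.log 2)⁻¹ ≤ (0.6931471803:ℝ)⁻¹ := by
      apply inv_anti₀ (by norm_num) h2.le
    rw [Real.log_inv] at hln
    have : Real.log (Real.log 2) ≥ 1 - (Real.log 2)⁻¹ := by linarith
    have h0 : (0.6931471803:ℝ)⁻¹ ≤ 1.45 := by norm_num
    push_cast
    nlinarith
  by_cases hd7 : d ≤ 7
  · -- 3 ≤ d ≤ 7
    have hd3 : 3 ≤ d := by omega
    have hd3' : (3:ℝ) ≤ (d:ℝ) := by exact_mod_cast hd3
    have he : Real.exp 1 ≤ (d:ℝ) := by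
      have := Real.exp_one_lt_d9
      linarith
    have hlog1 : 1 ≤ Real.log d := by
      rw [Real.le_log_iff_exp_le (by linarith)]
      simpa using he
    have hll : 0 ≤ Real.log (Real.log d) := Real.log_nonneg hlog1
    have hd7' : (d:ℝ) ≤ 7 := by exact_mod_cast hd7
    nlinarith
  · -- d ≥ 8
    have hd8 : 8 ≤ d := by omega
    have hd8' : (8:ℝ) ≤ (d:ℝ) := by exact_mod_cast hd8
    have h2 : (0.6931471803:ℝ) < Real.log 2 := Real.log_two_gt_d9
    have hlog8 : Real.log 8 = 3 * Real.log 2 := by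
      rw [show (8:ℝ) = 2^3 by norm_num, Real.log_pow]
      push_cast; ring
    have hlogd : 2 ≤ Real.log d := by
      have := Real.log_le_log (by norm_num : (0:ℝ) < 8) hd8'
      rw [hlog8] at this
      linarith
    have hll : Real.log 2 ≤ Real.log (Real.log d) :=
      Real.log_le_log (by norm_num) (by linarith)
    have hll2 : (1/2 : ℝ) ≤ Real.log (Real.log d) := by linarith
    nlinarith


end AuxStmt13

/-- Near-optimal (G-optimal) experimental design and least-squares estimation: if the image
of the feature map `φ : X → ℝ^d` is compact and spans `ℝ^d`, there is a finitely supported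
probability distribution (support `T`, weights `w`) with at most `4d·log(log d) + 16`
support points whose design matrix `G = Σ_{x∈T} w x • φ x φ xᵀ` is invertible, such that
for any `ε`-realizable `μ` (witnessed by `θ⋆`) and any `r` with `|r − μ| ≤ δ` on `T`, the
least-squares estimator `θ̂ = G⁻¹ (Σ_{x∈T} w x · r x • φ x)` satisfies
`|⟨φ x, θ̂⟩ − μ x| ≤ ε + (ε + δ)·√(2d)` for all `x ∈ X`. -/
theorem stmt_13 {X : Type*} [Nonempty X] (d : ℕ) (hd : 1 ≤ d)
    (φ : X → Fin d → ℝ)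
    (hcompact : IsCompact (Set.range φ))
    (hspan : Submodule.span ℝ (Set.range φ) = ⊤) :
    ∃ (T : Finset X) (w : X → ℝ),
      (T.card : ℝ) ≤ 4 * d * Real.log (Real.log d) + 16 ∧
      (∀ x ∈ T, 0 < w x) ∧
      (∑ x ∈ T, w x) = 1 ∧
      IsUnit (∑ x ∈ T, w x • vecMulVec (φ x) (φ x)) ∧
      ∀ ε δ : ℝ, 0 ≤ ε → 0 ≤ δ → ∀ (θstar : Fin d → ℝ) (μ r : X → ℝ),
        (∀ x, |μ x - φ x ⬝ᵥ θstar| ≤ ε) →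
        (∀ x ∈ T, |r x - μ x| ≤ δ) →
        ∀ x, |φ x ⬝ᵥ ((∑ y ∈ T, w y • vecMulVec (φ y) (φ y))⁻¹
                  *ᵥ (∑ y ∈ T, (w y * r y) • φ y)) - μ x|
          ≤ ε + (ε + δ) * Real.sqrt (2 * d) := by
  classical
  obtain ⟨v, hvS, hdet, hlev⟩ := exists_good_design hd (Set.range φ) hcompact
    ⟨φ (Classical.arbitrary X), Set.mem_range_self _⟩ hspan
  set A := dmat v with hA
  have hdetu : IsUnit A.det := isUnit_iff_ne_zero.mpr (ne_of_gt hdet)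
  choose xs hxs using hvS
  have hn1 : 1 ≤ 2*d-1 := by omega
  set N : ℝ := ((2*d-1 : ℕ) : ℝ) with hN
  have hN0 : (0:ℝ) < N := by
    rw [hN]; exact_mod_cast hn1
  set T : Finset X := Finset.image xs Finset.univ with hT
  set w : X → ℝ := fun x => ((Finset.univ.filter fun i => xs i = x).card : ℝ) / N with hw
  have hmaps : ∀ i ∈ (Finset.univ : Finset (Fin (2*d-1))), xs i ∈ T :=
    fun i _ => Finset.mem_image_of_mem xs (Finset.mem_univ i)
  -- weights positive on T
  have hwpos : ∀ x ∈ T, 0 < w x := by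
    intro x hx
    obtain ⟨i, _, rfl⟩ := Finset.mem_image.mp hx
    have : i ∈ Finset.univ.filter fun j => xs j = xs i := by simp
    have hc : 0 < (Finset.univ.filter fun j => xs j = xs i).card :=
      Finset.card_pos.mpr ⟨i, this⟩
    rw [hw]
    positivity
  -- weights sum to 1
  have hw1 : (∑ x ∈ T, w x) = 1 := by
    have h1 : ∑ x ∈ T, ∑ _i ∈ Finset.univ.filter fun i => xs i = x, N⁻¹
        = ∑ _i : Fin (2*d-1), N⁻¹ := Finset.sum_fiberwise_of_maps_to hmaps _
    have h2 : ∀ x ∈ T, ∑ _i ∈ Finset.univ.filter fun i => xs i = x, N⁻¹ = w x := by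
      intro x _
      simp only [hw]
      rw [Finset.sum_const, nsmul_eq_mul, div_eq_mul_inv]
    rw [← Finset.sum_congr rfl h2, h1, Finset.sum_const, Finset.card_univ, Fintype.card_fin,
      nsmul_eq_mul]
    rw [← hN]
    exact mul_inv_cancel₀ (ne_of_gt hN0)
  -- design matrix identity
  have hG : (∑ x ∈ T, w x • vecMulVec (φ x) (φ x)) = N⁻¹ • A := by
    have h1 : ∑ x ∈ T, ∑ i ∈ Finset.univ.filter fun i => xs i = x,
        N⁻¹ • vecMulVec (φ (xs i)) (φ (xs i))
        = ∑ i : Fin (2*d-1), N⁻¹ • vecMulVec (φ (xs i)) (φ (xs i)) :=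
      Finset.sum_fiberwise_of_maps_to hmaps _
    have h2 : ∀ x ∈ T, ∑ i ∈ Finset.univ.filter fun i => xs i = x,
        N⁻¹ • vecMulVec (φ (xs i)) (φ (xs i)) = w x • vecMulVec (φ x) (φ x) := by
      intro x _
      rw [Finset.sum_congr rfl (fun i hi => by
        rw [(Finset.mem_filter.mp hi).2])]
      simp only [hw]
      rw [Finset.sum_const, ← Nat.cast_smul_eq_nsmul ℝ, smul_smul, div_eq_mul_inv]
    rw [← Finset.sum_congr rfl h2, h1]
    have h3 : ∀ i : Fin (2*d-1), N⁻¹ • vecMulVec (φ (xs i)) (φ (xs i))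
        = N⁻¹ • vecMulVec (v i) (v i) := fun i => by rw [hxs i]
    rw [Finset.sum_congr rfl fun i _ => h3 i, ← Finset.smul_sum, hA]
    rfl
  set G := ∑ x ∈ T, w x • vecMulVec (φ x) (φ x) with hGdef
  -- G is invertible
  have hGdet : 0 < G.det := by
    rw [hG, Matrix.det_smul]
    have : (0:ℝ) < N⁻¹ ^ (Fintype.card (Fin d)) := by positivity
    exact mul_pos this hdet
  have hGdetu : IsUnit G.det := isUnit_iff_ne_zero.mpr (ne_of_gt hGdet)
  have hGunit : IsUnit G := (Matrix.isUnit_iff_isUnit_det G).mpr hGdetu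
  -- inverse formula
  have hGinv : G⁻¹ = N • A⁻¹ := by
    apply Matrix.inv_eq_right_inv
    rw [hG, Matrix.smul_mul, Matrix.mul_smul, smul_smul, A.mul_nonsing_inv hdetu,
      inv_mul_cancel₀ (ne_of_gt hN0), one_smul]
  -- leverage bound
  have hlev2 : ∀ x : X, φ x ⬝ᵥ (G⁻¹ *ᵥ φ x) ≤ 2*(d:ℝ) := by
    intro x
    rw [hGinv, Matrix.smul_mulVec, dotProduct_smul, smul_eq_mul]
    have h1 : φ x ⬝ᵥ (A⁻¹ *ᵥ φ x) ≤ 1 := hlev (φ x) (Set.mem_range_self x)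
    have h2 : N * (φ x ⬝ᵥ (A⁻¹ *ᵥ φ x)) ≤ N * 1 := by
      apply mul_le_mul_of_nonneg_left h1 hN0.le
    have h3 : N ≤ 2*(d:ℝ) := by
      rw [hN]
      have : ((2*d-1:ℕ):ℝ) = 2*(d:ℝ)-1 := by
        have h4 : (1:ℕ) ≤ 2*d := by omega
        push_cast [Nat.cast_sub h4]; ring
      rw [this]; linarith
    linarith
  -- leverage nonneg lower? not needed
  have hGsymm : Gᵀ = G := by
    rw [hG, Matrix.transpose_smul, dmat_symm]
  have hGinvsymm : G⁻¹ᵀ = G⁻¹ := by rw [Matrix.transpose_nonsing_inv, hGsymm]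
  refine ⟨T, w, ?_, hwpos, hw1, hGunit, ?_⟩
  · -- cardinality bound
    calc (T.card : ℝ) ≤ ((Finset.univ : Finset (Fin (2*d-1))).card : ℝ) := by
          exact_mod_cast Finset.card_image_le
      _ = ((2*d-1 : ℕ) : ℝ) := by rw [Finset.card_univ, Fintype.card_fin]
      _ ≤ 4*d*Real.log (Real.log d) + 16 := card_num_bound d hd
  · intro ε δ hε hδ θstar μ r hμ hr x
    set q : Fin d → ℝ := G⁻¹ *ᵥ φ x with hq
    have hmq : ∀ y : X, φ x ⬝ᵥ (G⁻¹ *ᵥ φ y) = q ⬝ᵥ φ y := by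
      intro y
      rw [dotProduct_mulVec, hq, ← Matrix.vecMul_transpose, hGinvsymm]
    -- decompose the estimator
    have hsplit : ∀ y : X, (w y * r y) • φ y
        = (w y * (φ y ⬝ᵥ θstar)) • φ y + (w y * (r y - φ y ⬝ᵥ θstar)) • φ y := by
      intro y
      rw [← add_smul]
      congr 1
      ring
    have hGθ : ∑ y ∈ T, (w y * (φ y ⬝ᵥ θstar)) • φ y = G *ᵥ θstar := by
      rw [hGdef, sum_mulVec']
      refine Finset.sum_congr rfl fun y _ => ?_
      rw [Matrix.smul_mulVec, vmv_mulVec, smul_smul]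
    have hdecomp : φ x ⬝ᵥ (G⁻¹ *ᵥ (∑ y ∈ T, (w y * r y) • φ y))
        = φ x ⬝ᵥ θstar + ∑ y ∈ T, (w y * (r y - φ y ⬝ᵥ θstar)) * (q ⬝ᵥ φ y) := by
      rw [Finset.sum_congr rfl fun y _ => hsplit y, Finset.sum_add_distrib, hGθ,
        Matrix.mulVec_add, dotProduct_add]
      congr 1
      · rw [Matrix.mulVec_mulVec, G.nonsing_inv_mul hGdetu, Matrix.one_mulVec]
      · rw [dotProduct_mulVec, ← hGinvsymm, Matrix.vecMul_transpose, ← hq, dot_sum]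
        exact Finset.sum_congr rfl fun y _ => by rw [dotProduct_smul, smul_eq_mul]
    rw [hdecomp]
    -- bound the error
    have herr : ∀ y ∈ T, |w y * (r y - φ y ⬝ᵥ θstar) * (q ⬝ᵥ φ y)|
        ≤ (ε + δ) * (w y * |q ⬝ᵥ φ y|) := by
      intro y hy
      rw [abs_mul, abs_mul]
      have h1 : |r y - φ y ⬝ᵥ θstar| ≤ ε + δ := by
        have := abs_add_le (r y - μ y) (μ y - φ y ⬝ᵥ θstar)
        have h2 := hr y hy
        have h3 := hμ y
        have h4 : r y - φ y ⬝ᵥ θstar = (r y - μ y) + (μ y - φ y ⬝ᵥ θstar) := by ring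
        rw [h4]
        calc |(r y - μ y) + (μ y - φ y ⬝ᵥ θstar)| ≤ |r y - μ y| + |μ y - φ y ⬝ᵥ θstar| :=
            abs_add_le _ _
          _ ≤ δ + ε := add_le_add h2 h3
          _ = ε + δ := by ring
      have hwnn : 0 ≤ w y := (hwpos y hy).le
      have : |w y| = w y := abs_of_nonneg hwnn
      rw [this]
      calc w y * |r y - φ y ⬝ᵥ θstar| * |q ⬝ᵥ φ y|
          ≤ w y * (ε + δ) * |q ⬝ᵥ φ y| := by
            apply mul_le_mul_of_nonneg_right _ (abs_nonneg _)
            exact mul_le_mul_of_nonneg_left h1 hwnn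
        _ = (ε + δ) * (w y * |q ⬝ᵥ φ y|) := by ring
    -- Cauchy-Schwarz
    have hCS : ∑ y ∈ T, w y * |q ⬝ᵥ φ y| ≤ Real.sqrt (2*(d:ℝ)) := by
      have hsq : (∑ y ∈ T, w y * |q ⬝ᵥ φ y|)^2 ≤ 2*(d:ℝ) := by
        have hcs := Finset.sum_mul_sq_le_sq_mul_sq T (fun y => Real.sqrt (w y))
          (fun y => Real.sqrt (w y) * |q ⬝ᵥ φ y|)
        have h1 : ∀ y ∈ T, Real.sqrt (w y) * (Real.sqrt (w y) * |q ⬝ᵥ φ y|)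
            = w y * |q ⬝ᵥ φ y| := by
          intro y hy
          rw [← mul_assoc, Real.mul_self_sqrt (hwpos y hy).le]
        have h2 : ∀ y ∈ T, (Real.sqrt (w y))^2 = w y := fun y hy =>
          Real.sq_sqrt (hwpos y hy).le
        have h3 : ∀ y ∈ T, (Real.sqrt (w y) * |q ⬝ᵥ φ y|)^2 = w y * (q ⬝ᵥ φ y)^2 := by
          intro y hy
          rw [mul_pow, Real.sq_sqrt (hwpos y hy).le, sq_abs]
        rw [Finset.sum_congr rfl h1, Finset.sum_congr rfl h2, Finset.sum_congr rfl h3,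
          hw1, one_mul] at hcs
        -- ∑ w (q⬝φ)² = φx ⬝ G⁻¹ φx ≤ 2d
        have hqG : ∑ y ∈ T, w y * (q ⬝ᵥ φ y)^2 = φ x ⬝ᵥ (G⁻¹ *ᵥ φ x) := by
          have h4 : q ⬝ᵥ (G *ᵥ q) = ∑ y ∈ T, w y * (q ⬝ᵥ φ y)^2 := by
            rw [hGdef, sum_mulVec', dot_sum]
            refine Finset.sum_congr rfl fun y _ => ?_
            rw [Matrix.smul_mulVec, dotProduct_smul, smul_eq_mul, dot_vmv,
              dotProduct_comm (φ y) q]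
            ring
          rw [← h4, hq, Matrix.mulVec_mulVec, G.mul_nonsing_inv hGdetu, Matrix.one_mulVec]
          rw [dotProduct_comm]
        rw [hqG] at hcs
        exact hcs.trans (hlev2 x)
      have hnn : 0 ≤ ∑ y ∈ T, w y * |q ⬝ᵥ φ y| :=
        Finset.sum_nonneg fun y hy => mul_nonneg (hwpos y hy).le (abs_nonneg _)
      calc ∑ y ∈ T, w y * |q ⬝ᵥ φ y| = Real.sqrt ((∑ y ∈ T, w y * |q ⬝ᵥ φ y|)^2) :=
          (Real.sqrt_sq hnn).symm
        _ ≤ Real.sqrt (2*(d:ℝ)) := Real.sqrt_le_sqrt hsq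
    -- combine
    calc |φ x ⬝ᵥ θstar + ∑ y ∈ T, w y * (r y - φ y ⬝ᵥ θstar) * (q ⬝ᵥ φ y) - μ x|
        = |(φ x ⬝ᵥ θstar - μ x) + ∑ y ∈ T, w y * (r y - φ y ⬝ᵥ θstar) * (q ⬝ᵥ φ y)| := by
          congr 1; ring
      _ ≤ |φ x ⬝ᵥ θstar - μ x| + |∑ y ∈ T, w y * (r y - φ y ⬝ᵥ θstar) * (q ⬝ᵥ φ y)| :=
          abs_add_le _ _
      _ ≤ ε + (ε + δ) * Real.sqrt (2*(d:ℝ)) := by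
          have ha : |φ x ⬝ᵥ θstar - μ x| ≤ ε := by
            rw [abs_sub_comm]; exact hμ x
          have hb : |∑ y ∈ T, w y * (r y - φ y ⬝ᵥ θstar) * (q ⬝ᵥ φ y)|
              ≤ (ε + δ) * Real.sqrt (2*(d:ℝ)) := by
            calc |∑ y ∈ T, w y * (r y - φ y ⬝ᵥ θstar) * (q ⬝ᵥ φ y)|
                ≤ ∑ y ∈ T, |w y * (r y - φ y ⬝ᵥ θstar) * (q ⬝ᵥ φ y)| :=
                  Finset.abs_sum_le_sum_abs _ _
              _ ≤ ∑ y ∈ T, (ε + δ) * (w y * |q ⬝ᵥ φ y|) := Finset.sum_le_sum herr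
              _ = (ε + δ) * ∑ y ∈ T, w y * |q ⬝ᵥ φ y| := by rw [← Finset.mul_sum]
              _ ≤ (ε + δ) * Real.sqrt (2*(d:ℝ)) := by
                  apply mul_le_mul_of_nonneg_left hCS (by linarith)
          linarith
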